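/- For every integer d ≥ 2 there exist a natural number m with m > d²/16 and a function g₁ : (Fin d → Bool) → Fin m such that: for every vector v : Fin d → Bool and every target m₀ ∈ Fin m, there exist indices i₀, i₁ ∈ Fin d with g₁(v XOR e_{i₀} XOR e_{i₁}) = m₀. That is, any output value of g₁ can be forced by flipping (at most) two bits of the input vector. -/

import Mathlib

private lemma sum_flip_aux {W : Type*} [AddCommGroup W] [Fintype W] [DecidableEq W]
    (hW : ∀ x : W, x + x = 0)
    {d : ℕ} (f : W → Fin d)
    (v v' : Fin d → Bool) (x0 : W)
    (h1 : v' (f x0) = ! v (f x0))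
    (h2 : ∀ x : W, x ≠ x0 → v' (f x) = v (f x)) :
    (∑ x : W, if v' (f x) then x else 0) = (∑ x : W, if v (f x) then x else 0) + x0 := by
  rw [← Finset.sum_erase_add _ _ (Finset.mem_univ x0),
      ← Finset.sum_erase_add _ _ (Finset.mem_univ x0)]
  have hs : ∑ x ∈ Finset.univ.erase x0, (if v' (f x) then x else 0)
      = ∑ x ∈ Finset.univ.erase x0, (if v (f x) then x else 0) := by
    refine Finset.sum_congr rfl fun x hx => ?_
    rw [h2 x (Finset.ne_of_mem_erase hx)]
  rw [hs, h1]
  cases hb : v (f x0) <;> simp [add_assoc, hW x0]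

theorem exists_two_flip_encoding (d : ℕ) (hd : 2 ≤ d) :
    ∃ m : ℕ, (d : ℝ) ^ 2 / 16 < (m : ℝ) ∧
      ∃ g₁ : (Fin d → Bool) → Fin m,
        ∀ (v : Fin d → Bool) (m₀ : Fin m),
          ∃ i₀ i₁ : Fin d,
            g₁ (fun i => xor (xor (v i) (decide (i = i₀))) (decide (i = i₁))) = m₀ := by
  obtain ⟨u, hu1, hu2⟩ : ∃ u : ℕ, 2 ^ (u + 1) ≤ d ∧ d < 2 ^ (u + 2) := by
    have h1 : 1 ≤ Nat.log 2 d := by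
      rw [Nat.le_log_iff_pow_le (by norm_num) (by omega)]
      simpa using hd
    refine ⟨Nat.log 2 d - 1, ?_, ?_⟩
    · rw [Nat.sub_add_cancel h1]
      exact Nat.pow_log_le_self 2 (by omega)
    · have h2 : Nat.log 2 d - 1 + 2 = Nat.log 2 d + 1 := by omega
      rw [h2]
      exact Nat.lt_pow_succ_log_self (by norm_num) d
  have hk2 : 2 ^ u + 2 ^ u ≤ d := by
    have : 2 ^ (u + 1) = 2 ^ u + 2 ^ u := by ring
    omega
  set W := (Fin u → ZMod 2) with hWdef
  have hWadd : ∀ x : W, x + x = 0 := by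
    intro x; funext i
    have : (x i) + (x i) = 0 := by
      have : (2 : ZMod 2) = 0 := by decide
      calc x i + x i = 2 * x i := by ring
        _ = 0 := by rw [this]; ring
    exact this
  have hcard : Fintype.card W = 2 ^ u := by
    simp [hWdef]
  -- the equivalence to Fin (2^u)
  obtain ⟨e0⟩ : Nonempty (W ≃ Fin (2 ^ u)) := ⟨Fintype.equivFinOfCardEq hcard⟩
  obtain ⟨em⟩ : Nonempty ((W × W) ≃ Fin (2 ^ u * 2 ^ u)) :=
    ⟨Fintype.equivFinOfCardEq (by simp [hcard])⟩
  have hlt0 : ∀ x : W, (e0 x : ℕ) < 2 ^ u := fun x => (e0 x).2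
  have idxAlt : ∀ x : W, (e0 x : ℕ) < d := fun x => lt_of_lt_of_le (by
    have := hlt0 x; omega) (le_refl d)
  have idxBlt : ∀ x : W, 2 ^ u + (e0 x : ℕ) < d := fun x => by
    have := hlt0 x; omega
  set idxA : W → Fin d := fun x => ⟨(e0 x : ℕ), by have := hlt0 x; omega⟩ with hidxA
  set idxB : W → Fin d := fun x => ⟨2 ^ u + (e0 x : ℕ), idxBlt x⟩ with hidxB
  have hAinj : Function.Injective idxA := by
    intro x y h
    have h' := congrArg Fin.val h
    simp only [hidxA] at h'
    exact e0.injective (Fin.val_injective h')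
  have hBinj : Function.Injective idxB := by
    intro x y h
    have h' := congrArg Fin.val h
    simp only [hidxB] at h'
    have h'' : (e0 x : ℕ) = (e0 y : ℕ) := by omega
    exact e0.injective (Fin.val_injective h'')
  have hAB : ∀ x y : W, idxA x ≠ idxB y := by
    intro x y h
    have : (e0 x : ℕ) = 2 ^ u + (e0 y : ℕ) := congrArg Fin.val h
    have := hlt0 x; omega
  set SA : (Fin d → Bool) → W := fun v => ∑ x : W, if v (idxA x) then x else 0 with hSA
  set SB : (Fin d → Bool) → W := fun v => ∑ x : W, if v (idxB x) then x else 0 with hSB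
  refine ⟨2 ^ u * 2 ^ u, ?_, fun v => em (SA v, SB v), ?_⟩
  · have hdR : (d : ℝ) < 4 * 2 ^ u := by
      have : (d : ℝ) < ((2 ^ (u + 2) : ℕ) : ℝ) := by exact_mod_cast hu2
      calc (d : ℝ) < ((2 ^ (u + 2) : ℕ) : ℝ) := this
        _ = 4 * 2 ^ u := by push_cast; ring
    have h2u : (0 : ℝ) < 2 ^ u := by positivity
    have hd0 : (0 : ℝ) ≤ (d : ℝ) := by positivity
    rw [div_lt_iff₀ (by norm_num)]
    push_cast
    nlinarith
  · intro v m₀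
    set a := (em.symm m₀).1 with ha
    set b := (em.symm m₀).2 with hb
    have hab : em (a, b) = m₀ := by
      rw [ha, hb, Prod.mk.eta, em.apply_symm_apply]
    refine ⟨idxA (a - SA v), idxB (b - SB v), ?_⟩
    set xa := a - SA v with hxa
    set xb := b - SB v with hxb
    set v' : Fin d → Bool := fun i =>
      xor (xor (v i) (decide (i = idxA xa))) (decide (i = idxB xb)) with hv'
    have hSA' : SA v' = SA v + xa := by
      refine sum_flip_aux hWadd idxA v v' xa ?_ ?_
      · have hne : idxA xa ≠ idxB xb := hAB xa xb
        simp [hv', hne]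
      · intro x hx
        have hne1 : idxA x ≠ idxA xa := fun h => hx (hAinj h)
        have hne2 : idxA x ≠ idxB xb := hAB x xb
        simp [hv', hne1, hne2]
    have hSB' : SB v' = SB v + xb := by
      refine sum_flip_aux hWadd idxB v v' xb ?_ ?_
      · have hne : idxB xb ≠ idxA xa := fun h => hAB xa xb h.symm
        simp [hv', hne]
      · intro x hx
        have hne1 : idxB x ≠ idxA xa := fun h => hAB xa x h.symm
        have hne2 : idxB x ≠ idxB xb := fun h => hx (hBinj h)
        simp [hv', hne1, hne2]
    show em (SA v', SB v') = m₀
    rw [hSA', hSB', hxa, hxb]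
    rw [show SA v + (a - SA v) = a by abel, show SB v + (b - SB v) = b by abel]
    exact hab
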